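/- The generator drift inequality for V(ν) = ‖ν‖: if f ≥ f_min > 0 and Λ > 0, then for any finite positive measure ν, the quantity L V(ν) := -ν[f] + [ν[f] + Λ(1-‖ν‖)]_+ satisfies L V(ν) ≤ Λ - (min(f_min, Λ)) ‖ν‖. Consequently, there exist constants K* > 0, d > 0, c > 0 with L V(ν) ≤ d·1_{‖ν‖≤K*} - c(1 + ‖ν‖) for all ν. -/

import Mathlib

open Real MeasureTheory Set

/-- Total mass of a measure on ℝ, as a real number. -/
noncomputable def mass (ν : Measure ℝ) : ℝ := (ν Set.univ).toReal

/-- The generator applied to V(ν) = ‖ν‖. -/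
noncomputable def LV (f : ℝ → ℝ) (Λ : ℝ) (ν : Measure ℝ) : ℝ :=
  -(∫ u, f u ∂ν) + max ((∫ u, f u ∂ν) + Λ * (1 - mass ν)) 0

/-- Foster–Lyapunov drift inequality for V(ν) = ‖ν‖. -/
theorem foster_lyapunov (f : ℝ → ℝ) (fmin B Λ : ℝ)
    (hfmin : 0 < fmin) (hlow : ∀ u, fmin ≤ f u) (hup : ∀ u, f u ≤ B)
    (hmeas : Measurable f) (hΛ : 0 < Λ) :
    (∀ ν : Measure ℝ, IsFiniteMeasure ν →
      LV f Λ ν ≤ Λ - min fmin Λ * mass ν) ∧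
    (∃ K d c : ℝ, 0 < K ∧ 0 < d ∧ 0 < c ∧
      ∀ ν : Measure ℝ, IsFiniteMeasure ν →
        LV f Λ ν ≤ (if mass ν ≤ K then d else 0) - c * (1 + mass ν)) := by
  have hmin0 : 0 < min fmin Λ := lt_min hfmin hΛ
  have key : ∀ ν : Measure ℝ, IsFiniteMeasure ν →
      LV f Λ ν ≤ Λ - min fmin Λ * mass ν := by
    intro ν hν
    have hm0 : 0 ≤ mass ν := ENNReal.toReal_nonneg
    have hint : Integrable f ν := ⟨hmeas.aestronglyMeasurable,
      HasFiniteIntegral.of_bounded (C := B) (Filter.Eventually.of_forall fun u => by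
        rw [Real.norm_eq_abs, abs_le]
        exact ⟨by linarith [hlow u, hfmin.le, hup u], hup u⟩)⟩
    have hI : fmin * mass ν ≤ ∫ u, f u ∂ν := by
      have := integral_mono (integrable_const fmin) hint (fun u => hlow u)
      simpa [integral_const, mass, mul_comm, smul_eq_mul, Measure.real] using this
    unfold LV
    rcases le_total ((∫ u, f u ∂ν) + Λ * (1 - mass ν)) 0 with h | h
    · rw [max_eq_right h]
      have h1 : min fmin Λ ≤ fmin := min_le_left _ _
      nlinarith
    · rw [max_eq_left h]
      have h2 : min fmin Λ ≤ Λ := min_le_right _ _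
      nlinarith
  refine ⟨key, ?_⟩
  set c := min fmin Λ / 2 with hc
  have hc0 : 0 < c := by positivity
  set K := Λ / c + 1 with hK
  have hK0 : 0 < K := by positivity
  refine ⟨K, Λ + c * (1 + K), c, hK0, by positivity, hc0, ?_⟩
  intro ν hν
  have hm0 : 0 ≤ mass ν := ENNReal.toReal_nonneg
  have h1 := key ν hν
  have h2 : min fmin Λ = 2 * c := by rw [hc]; ring
  by_cases hmK : mass ν ≤ K
  · rw [if_pos hmK]; nlinarith
  · rw [if_neg hmK]
    push_neg at hmK
    have : Λ / c + 1 < mass ν := hmK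
    have hΛc : Λ + c < c * mass ν := by
      have := (div_lt_iff₀ hc0).mp (by linarith : Λ / c < mass ν - 1)
      nlinarith
    nlinarith
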